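/- Let T be an essentially small triangulated category in which every object is a finite direct sum of indecomposables, and suppose T is a block (equivalently path-connected). Then for all indecomposable objects X and Y there exists a path from X to Y[m] for some m ≥ 0. -/

import Mathlib

/-!
STATEMENT 11: Let `T` be an essentially small triangulated category in which every object
is a finite direct sum of indecomposables, and suppose `T` is a block.  Then for all
indecomposable objects `X` and `Y` there is a path from `X` to `Y⟦m⟧` for some `m ≥ 0`.
-/
open CategoryTheory Category Limits Pretriangulated

section PathsAndBlocks

variable {C : Type*} [Category C] [Preadditive C] [HasZeroObject C] [HasShift C ℤ]
  [∀ n : ℤ, (shiftFunctor C n).Additive] [Pretriangulated C]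
  [HasBinaryBiproducts C] [HasFiniteBiproducts C]

/-- An object is indecomposable if it is non-zero and has no non-trivial
direct sum decomposition. -/
def IsIndec (X : C) : Prop :=
  ¬ IsZero X ∧ ∀ Y Z : C, (X ≅ Y ⊞ Z) → IsZero Y ∨ IsZero Z

/-- A single step of a path: both objects are indecomposable and either there is a
non-zero morphism `X ⟶ Y` or `Y = X⟦1⟧`. -/
def PathStep (X Y : C) : Prop :=
  IsIndec X ∧ IsIndec Y ∧ ((∃ f : X ⟶ Y, f ≠ 0) ∨ Nonempty (Y ≅ X⟦(1 : ℤ)⟧))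

/-- There is a path `X ⇝ Y`: a finite sequence of path steps. -/
def HasPath : C → C → Prop := Relation.ReflTransGen PathStep

/-- There is a walk from `X` to `Y`: a finite sequence of forward or backward path steps. -/
def HasWalk : C → C → Prop := Relation.ReflTransGen (fun X Y => PathStep X Y ∨ PathStep Y X)

/-- Every object is a finite direct sum of indecomposable objects. -/
def AllObjectsDecompose : Prop :=
  ∀ X : C, ∃ (n : ℕ) (G : Fin n → C), (∀ i, IsIndec (G i)) ∧ Nonempty (X ≅ ⨁ G)

variable (C) in
/-- A non-trivial decomposition of the triangulated category `C` into a product of two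
triangulated subcategories: two iso-closed, shift-closed classes of objects, each
containing a non-zero object, with no non-zero morphisms between them in either
direction, such that every object is a direct sum of an object of each. -/
def IsProductDecomp (P Q : C → Prop) : Prop :=
  (∀ {X Y : C}, (X ≅ Y) → P X → P Y) ∧ (∀ {X Y : C}, (X ≅ Y) → Q X → Q Y) ∧
  (∃ X, P X ∧ ¬ IsZero X) ∧ (∃ X, Q X ∧ ¬ IsZero X) ∧
  (∀ (X Y : C), P X → Q Y → ∀ f : X ⟶ Y, f = 0) ∧
  (∀ (X Y : C), Q X → P Y → ∀ f : X ⟶ Y, f = 0) ∧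
  (∀ (X : C) (n : ℤ), P X → P (X⟦n⟧)) ∧ (∀ (X : C) (n : ℤ), Q X → Q (X⟦n⟧)) ∧
  (∀ X : C, ∃ X' X'' : C, P X' ∧ Q X'' ∧ Nonempty (X ≅ X' ⊞ X''))

variable (C) in
/-- `C` is a block: it admits no non-trivial product decomposition. -/
def IsBlock : Prop := ¬ ∃ P Q : C → Prop, IsProductDecomp C P Q

end PathsAndBlocks

section AuxLemmas

variable {C : Type*} [Category C] [Preadditive C] [HasZeroObject C] [HasShift C ℤ]
  [∀ n : ℤ, (shiftFunctor C n).Additive] [Pretriangulated C]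
  [HasBinaryBiproducts C] [HasFiniteBiproducts C]

lemma isZero_shift_iff (n : ℤ) (A : C) : IsZero ((A : C)⟦n⟧) ↔ IsZero A := by
  rw [IsZero.iff_id_eq_zero, IsZero.iff_id_eq_zero]
  constructor
  · intro h
    refine ((shiftFunctor C n).map_eq_zero_iff).1 ?_
    rw [CategoryTheory.Functor.map_id]
    exact h
  · intro h
    calc 𝟙 (A⟦n⟧) = (shiftFunctor C n).map (𝟙 A) := ((shiftFunctor C n).map_id A).symm
    _ = (shiftFunctor C n).map 0 := by rw [h]
    _ = 0 := (shiftFunctor C n).map_zero _ _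

lemma IsIndec.of_iso {A B : C} (h : IsIndec A) (e : A ≅ B) : IsIndec B :=
  ⟨fun hB => h.1 (hB.of_iso e), fun Y Z i => h.2 Y Z (e ≪≫ i)⟩

lemma IsIndec.shift {A : C} (h : IsIndec A) (n : ℤ) : IsIndec (A⟦n⟧) := by
  constructor
  · intro hz
    exact h.1 ((isZero_shift_iff n A).1 hz)
  · intro Y Z e
    haveI := preservesBinaryBiproducts_of_preservesBiproducts (shiftFunctor C (-n))
    have e' : A ≅ Y⟦(-n : ℤ)⟧ ⊞ Z⟦(-n : ℤ)⟧ :=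
      (shiftEquiv C n).unitIso.app A ≪≫ (shiftFunctor C (-n)).mapIso e ≪≫
        (shiftFunctor C (-n)).mapBiprod Y Z
    rcases h.2 _ _ e' with hz | hz
    · exact Or.inl ((isZero_shift_iff (-n) Y).1 hz)
    · exact Or.inr ((isZero_shift_iff (-n) Z).1 hz)

lemma iso_hom_ne_zero {A B : C} (hA : ¬ IsZero A) (e : A ≅ B) : e.hom ≠ 0 := by
  intro h
  apply hA
  rw [IsZero.iff_id_eq_zero, ← e.hom_inv_id, h, zero_comp]

lemma PathStep.of_iso {A B : C} (hA : IsIndec A) (e : A ≅ B) : PathStep A B :=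
  ⟨hA, hA.of_iso e, Or.inl ⟨e.hom, iso_hom_ne_zero hA.1 e⟩⟩

lemma PathStep.shift {A B : C} (h : PathStep A B) (n : ℤ) : PathStep (A⟦n⟧) (B⟦n⟧) := by
  obtain ⟨hA, hB, hstep⟩ := h
  refine ⟨hA.shift n, hB.shift n, ?_⟩
  rcases hstep with ⟨f, hf⟩ | he
  · exact Or.inl ⟨f⟦n⟧', fun h0 => hf (((shiftFunctor C n).map_eq_zero_iff).1 h0)⟩
  · obtain ⟨e⟩ := he
    exact Or.inr ⟨(shiftFunctor C n).mapIso e ≪≫ shiftComm A 1 n⟩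

lemma HasPath.shift {A B : C} (h : HasPath A B) (n : ℤ) : HasPath (A⟦n⟧) (B⟦n⟧) :=
  Relation.ReflTransGen.lift (fun Z : C => Z⟦n⟧) (fun _ _ (hs : PathStep _ _) => hs.shift n) _ _ h

lemma HasPath.isIndec {A B : C} (h : HasPath A B) (hA : IsIndec A) : IsIndec B := by
  induction h with
  | refl => exact hA
  | tail _ hstep _ => exact hstep.2.1

/-- The path relation to a non-negative shift, relative to a source `X`. -/
def RProp (X Z : C) : Prop := ∃ m : ℕ, HasPath X (Z⟦(m : ℤ)⟧)

lemma RProp.self {X : C} (hX : IsIndec X) : RProp X X :=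
  ⟨0, Relation.ReflTransGen.single (PathStep.of_iso hX ((shiftFunctorZero C ℤ).app X).symm)⟩

lemma RProp.of_iso {X A B : C} (hX : IsIndec X) (h : RProp X A) (e : A ≅ B) : RProp X B := by
  obtain ⟨m, hp⟩ := h
  exact ⟨m, hp.tail (PathStep.of_iso (hp.isIndec hX) ((shiftFunctor C (m : ℤ)).mapIso e))⟩

lemma hasPath_shift_nat {A : C} (hA : IsIndec A) : ∀ k : ℕ, HasPath A (A⟦(k : ℤ)⟧)
  | 0 => Relation.ReflTransGen.single (PathStep.of_iso hA ((shiftFunctorZero C ℤ).app A).symm)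
  | (k + 1) => by
      refine (hasPath_shift_nat hA k).tail
        ⟨(hasPath_shift_nat hA k).isIndec hA, hA.shift _, Or.inr ⟨?_⟩⟩
      exact (shiftFunctorAdd' C (k : ℤ) 1 (((k + 1 : ℕ) : ℤ)) (by push_cast; ring)).app A

lemma RProp.shift {X A : C} (hX : IsIndec X) (h : RProp X A) (n : ℤ) : RProp X (A⟦n⟧) := by
  obtain ⟨m, hp⟩ := h
  have hind : IsIndec (A⟦(m : ℤ)⟧) := hp.isIndec hX
  set m' : ℕ := ((m : ℤ) - n).toNat with hm'
  have hm'le : (m : ℤ) - n ≤ (m' : ℤ) := Int.self_le_toNat _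
  set k : ℕ := (n + (m' : ℤ) - m).toNat with hk
  have hkeq : (k : ℤ) = n + (m' : ℤ) - m := by omega
  have h1 : HasPath (A⟦(m : ℤ)⟧) ((A⟦(m : ℤ)⟧)⟦(k : ℤ)⟧) := hasPath_shift_nat hind k
  have e : (A⟦(m : ℤ)⟧)⟦(k : ℤ)⟧ ≅ (A⟦n⟧)⟦(m' : ℤ)⟧ :=
    ((shiftFunctorAdd' C (m : ℤ) (k : ℤ) (n + (m' : ℤ)) (by omega)).app A).symm ≪≫
      (shiftFunctorAdd' C n (m' : ℤ) (n + (m' : ℤ)) rfl).app A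
  exact ⟨m', (hp.trans h1).tail (PathStep.of_iso (h1.isIndec hind) e)⟩

lemma RProp.step {X A B : C} (hX : IsIndec X) (h : RProp X A) (hB : IsIndec B)
    (f : A ⟶ B) (hf : f ≠ 0) : RProp X B := by
  obtain ⟨m, hp⟩ := h
  refine ⟨m, hp.tail ⟨hp.isIndec hX, hB.shift _, Or.inl ⟨f⟦(m : ℤ)⟧', ?_⟩⟩⟩
  intro h0
  exact hf (((shiftFunctor C (m : ℤ)).map_eq_zero_iff).1 h0)

lemma RProp.ofPath {X A B : C} (h : RProp X A) (hp : HasPath A B) : RProp X B := by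
  obtain ⟨m, h1⟩ := h
  exact ⟨m, h1.trans (hp.shift (m : ℤ))⟩

/-- The key reversal lemma: a non-zero morphism `W ⟶ Z` between indecomposables can be
"reversed" along paths, using the octahedron-free cone argument. -/
lemma RProp.reverse (hdec : AllObjectsDecompose (C := C)) {X W Z : C} (hX : IsIndec X)
    (hW : IsIndec W) (hZ : IsIndec Z) (f : W ⟶ Z) (hf : f ≠ 0) (h : RProp X Z) :
    RProp X W := by
  suffices hZW : HasPath Z (W⟦(1 : ℤ)⟧) by
    have h1 : RProp X (W⟦(1 : ℤ)⟧) := h.ofPath hZW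
    have h2 : RProp X ((W⟦(1 : ℤ)⟧)⟦(-1 : ℤ)⟧) := h1.shift hX (-1)
    exact h2.of_iso hX ((shiftFunctorCompIsoId C (1 : ℤ) (-1 : ℤ) (by ring)).app W)
  classical
  obtain ⟨Co, g, h3, hT⟩ := distinguished_cocone_triangle f
  obtain ⟨n, G, hG, ⟨e⟩⟩ := hdec Co
  by_cases hcase : ∃ i, (g ≫ e.hom ≫ biproduct.π G i ≠ 0) ∧
      (biproduct.ι G i ≫ e.inv ≫ h3 ≠ 0)
  · obtain ⟨i, h1, h2⟩ := hcase
    exact Relation.ReflTransGen.head ⟨hZ, hG i, Or.inl ⟨_, h1⟩⟩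
      (Relation.ReflTransGen.single ⟨hG i, hW.shift 1, Or.inl ⟨_, h2⟩⟩)
  · push_neg at hcase
    set p : Fin n → Prop := fun i => g ≫ e.hom ≫ biproduct.π G i = 0 with hpdef
    have hgp : g ≫ (e.hom ≫ biproduct.toSubtype G p) = 0 := by
      refine biproduct.hom_ext _ _ fun j => ?_
      have hj : g ≫ e.hom ≫ biproduct.π G (j : Fin n) = 0 := j.2
      simp only [Category.assoc, biproduct.toSubtype_π, zero_comp]
      exact hj
    have hts : biproduct.toSubtype G p ≫ biproduct.fromSubtype G p ≫ (e.inv ≫ h3)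
        = e.inv ≫ h3 := by
      refine biproduct.hom_ext' _ _ fun j => ?_
      by_cases hj : p j
      · rw [← Category.assoc, show biproduct.ι G j ≫ biproduct.toSubtype G p = biproduct.ι (Subtype.restrict p G) ⟨j, hj⟩ from (biproduct.ι_toSubtype (f := G) (p := p) j).trans (dif_pos hj)]; exact biproduct.ι_fromSubtype_assoc (f := G) (p := p) ⟨j, hj⟩ _
      · rw [← Category.assoc, show biproduct.ι G j ≫ biproduct.toSubtype G p = 0 from (biproduct.ι_toSubtype (f := G) (p := p) j).trans (dif_neg hj), zero_comp]
        have hj' : g ≫ e.hom ≫ biproduct.π G j ≠ 0 := by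
          rw [hpdef] at hj; exact hj
        have := hcase j hj'
        rw [← Category.assoc] at this ⊢
        rw [this]
    obtain ⟨ψ, hψ⟩ : ∃ ψ : W⟦(1 : ℤ)⟧ ⟶ Co, e.hom ≫ biproduct.toSubtype G p ≫ biproduct.fromSubtype G p ≫ e.inv = h3 ≫ ψ := Triangle.yoneda_exact₃ _ hT
      (e.hom ≫ biproduct.toSubtype G p ≫ biproduct.fromSubtype G p ≫ e.inv) (by
        show g ≫ (e.hom ≫ biproduct.toSubtype G p ≫ biproduct.fromSubtype G p ≫ e.inv) = 0
        rw [← Category.assoc, ← Category.assoc, ← Category.assoc]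
        rw [show (g ≫ e.hom) ≫ biproduct.toSubtype G p =
          g ≫ (e.hom ≫ biproduct.toSubtype G p) by simp, hgp, zero_comp, zero_comp])
    change _ = h3 ≫ ψ at hψ
    have key : h3 ≫ ψ ≫ e.hom ≫ biproduct.toSubtype G p
        = e.hom ≫ biproduct.toSubtype G p := by
      have h' := congrArg (fun u => u ≫ (e.hom ≫ biproduct.toSubtype G p)) hψ.symm
      beta_reduce at h'
      simpa only [Category.assoc, Iso.inv_hom_id_assoc,
        biproduct.fromSubtype_toSubtype, biproduct.fromSubtype_toSubtype_assoc,
        Category.comp_id] using h'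
    set htil : (⨁ Subtype.restrict p G) ⟶ W⟦(1 : ℤ)⟧ :=
      biproduct.fromSubtype G p ≫ e.inv ≫ h3 with hhtil
    have hsplit : htil ≫ (ψ ≫ e.hom ≫ biproduct.toSubtype G p)
        = 𝟙 (⨁ Subtype.restrict p G) := by
      rw [hhtil]
      simp only [Category.assoc, key]
      simp [biproduct.fromSubtype_toSubtype]
    obtain ⟨D, a, b, hT2⟩ := distinguished_cocone_triangle htil
    have hb : b = 0 := by
      have h0 : b ≫ htil⟦(1 : ℤ)⟧' = 0 := comp_distTriang_mor_zero₃₁ _ hT2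
      have h1 : b ≫ (htil ≫ (ψ ≫ e.hom ≫ biproduct.toSubtype G p))⟦(1 : ℤ)⟧' = b := by
        rw [hsplit]; simp
      rw [← h1, Functor.map_comp, ← Category.assoc, h0, zero_comp]
    obtain ⟨e2, -, -⟩ := exists_iso_binaryBiproduct_of_distTriang _ hT2 hb
    change (W⟦(1 : ℤ)⟧) ≅ (⨁ Subtype.restrict p G) ⊞ D at e2
    rcases (hW.shift 1).2 _ _ e2 with hS | hD
    · -- the subtype part is zero, hence `h3 = 0` and `Z ≅ W`
      have hh0 : htil = 0 := hS.eq_of_src _ _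
      have h30 : h3 = 0 := by
        have : e.hom ≫ biproduct.toSubtype G p ≫ htil = h3 := by
          rw [hhtil]
          rw [show biproduct.toSubtype G p ≫ biproduct.fromSubtype G p ≫ e.inv ≫ h3 =
            biproduct.toSubtype G p ≫ biproduct.fromSubtype G p ≫ (e.inv ≫ h3) by
              simp only [Category.assoc], hts]
          simp
        rw [← this, hh0, comp_zero, comp_zero]
      obtain ⟨e3, -, -⟩ := exists_iso_binaryBiproduct_of_distTriang _ hT h30
      change Z ≅ W ⊞ Co at e3
      rcases hZ.2 _ _ e3 with hWz | hCo
      · exact absurd hWz hW.1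
      · have eZW : Z ≅ W := e3 ≪≫
          { hom := biprod.fst
            inv := biprod.lift (𝟙 W) 0
            hom_inv_id := by
              ext
              all_goals
                first
                | exact hCo.eq_of_src _ _
                | exact hCo.eq_of_tgt _ _
                | simp
            inv_hom_id := by simp }
        exact Relation.ReflTransGen.single
          ⟨hZ, hW.shift 1, Or.inr ⟨(shiftFunctor C (1 : ℤ)).mapIso eZW.symm⟩⟩
    · -- the complement is zero, hence `htil` is iso, `h3` split epi, so `f = 0`: absurd
      have hiso : IsIso htil := by
        have := (Triangle.isZero₃_iff_isIso₁ _ hT2).1 hD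
        exact this
      exfalso
      apply hf
      have hu : (inv htil ≫ biproduct.fromSubtype G p ≫ e.inv) ≫ h3 = 𝟙 (W⟦(1 : ℤ)⟧) := by
        simp only [Category.assoc]
        rw [show biproduct.fromSubtype G p ≫ e.inv ≫ h3 = htil from rfl]
        simp
      have h0 : h3 ≫ f⟦(1 : ℤ)⟧' = 0 := comp_distTriang_mor_zero₃₁ _ hT
      have : f⟦(1 : ℤ)⟧' = 0 := by
        calc f⟦(1 : ℤ)⟧' = 𝟙 (W⟦(1 : ℤ)⟧) ≫ f⟦(1 : ℤ)⟧' := by simp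
        _ = (inv htil ≫ biproduct.fromSubtype G p ≫ e.inv) ≫ (h3 ≫ f⟦(1 : ℤ)⟧') := by
            rw [← hu]; simp only [Category.assoc]
        _ = 0 := by rw [h0, comp_zero]
      exact ((shiftFunctor C (1 : ℤ)).map_eq_zero_iff).1 this

/-- `A` is a biproduct of the constant single family. -/
noncomputable def singleBiproductIso (A : C) : A ≅ ⨁ (fun _ : Fin 1 => A) where
  hom := biproduct.lift fun _ => 𝟙 A
  inv := biproduct.desc fun _ => 𝟙 A
  hom_inv_id := by rw [biproduct.lift_desc]; simp
  inv_hom_id := by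
    refine biproduct.hom_ext' _ _ fun i => biproduct.hom_ext _ _ fun j => ?_
    have : i = j := Subsingleton.elim i j
    subst this
    simp

end AuxLemmas

theorem path_to_nonneg_shift_of_block
    {C : Type*} [Category C] [Preadditive C] [HasZeroObject C] [HasShift C ℤ]
    [∀ n : ℤ, (shiftFunctor C n).Additive] [Pretriangulated C]
    [HasBinaryBiproducts C] [HasFiniteBiproducts C] [EssentiallySmall C]
    (hdec : AllObjectsDecompose (C := C)) (hblock : IsBlock C) :
    ∀ X Y : C, IsIndec X → IsIndec Y → ∃ m : ℕ, HasPath X (Y⟦(m : ℤ)⟧) := by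
  intro X Y hX hY
  by_contra hnot
  have hnotR : ¬ RProp X Y := hnot
  apply hblock
  classical
  refine ⟨fun A => ∃ (n : ℕ) (G : Fin n → C),
      (∀ i, IsIndec (G i) ∧ RProp X (G i)) ∧ Nonempty (A ≅ ⨁ G),
    fun A => ∃ (n : ℕ) (G : Fin n → C),
      (∀ i, IsIndec (G i) ∧ ¬ RProp X (G i)) ∧ Nonempty (A ≅ ⨁ G),
    ?_, ?_, ?_, ?_, ?_, ?_, ?_, ?_, ?_⟩
  · rintro A B eiso ⟨n, G, hG, ⟨eA⟩⟩
    exact ⟨n, G, hG, ⟨eiso.symm ≪≫ eA⟩⟩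
  · rintro A B eiso ⟨n, G, hG, ⟨eA⟩⟩
    exact ⟨n, G, hG, ⟨eiso.symm ≪≫ eA⟩⟩
  · exact ⟨X, ⟨1, fun _ => X, fun _ => ⟨hX, RProp.self hX⟩, ⟨singleBiproductIso X⟩⟩, hX.1⟩
  · exact ⟨Y, ⟨1, fun _ => Y, fun _ => ⟨hY, hnotR⟩, ⟨singleBiproductIso Y⟩⟩, hY.1⟩
  · rintro A B ⟨n₁, G, hG, ⟨eA⟩⟩ ⟨n₂, H, hH, ⟨eB⟩⟩ φ
    have hmid : eA.inv ≫ φ ≫ eB.hom = 0 := by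
      refine biproduct.hom_ext _ _ fun j => ?_
      refine biproduct.hom_ext' _ _ fun i => ?_
      simp only [Category.assoc, zero_comp, comp_zero]
      by_contra hne
      exact (hH j).2 ((hG i).2.step hX (hH j).1 _ hne)
    calc φ = eA.hom ≫ (eA.inv ≫ φ ≫ eB.hom) ≫ eB.inv := by simp
    _ = 0 := by rw [hmid]; simp
  · rintro A B ⟨n₁, H, hH, ⟨eA⟩⟩ ⟨n₂, G, hG, ⟨eB⟩⟩ φ
    have hmid : eA.inv ≫ φ ≫ eB.hom = 0 := by
      refine biproduct.hom_ext _ _ fun j => ?_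
      refine biproduct.hom_ext' _ _ fun i => ?_
      simp only [Category.assoc, zero_comp, comp_zero]
      by_contra hne
      exact (hH i).2 (RProp.reverse hdec hX (hH i).1 (hG j).1 _ hne (hG j).2)
    calc φ = eA.hom ≫ (eA.inv ≫ φ ≫ eB.hom) ≫ eB.inv := by simp
    _ = 0 := by rw [hmid]; simp
  · rintro A n ⟨k, G, hG, ⟨eA⟩⟩
    refine ⟨k, fun i => (G i)⟦n⟧, fun i => ⟨(hG i).1.shift n, (hG i).2.shift hX n⟩,
      ⟨(shiftFunctor C n).mapIso eA ≪≫ Functor.mapBiproduct (shiftFunctor C n) G⟩⟩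
  · rintro A n ⟨k, G, hG, ⟨eA⟩⟩
    refine ⟨k, fun i => (G i)⟦n⟧, fun i => ⟨(hG i).1.shift n, ?_⟩,
      ⟨(shiftFunctor C n).mapIso eA ≪≫ Functor.mapBiproduct (shiftFunctor C n) G⟩⟩
    intro hR
    have h1 : RProp X (((G i)⟦n⟧)⟦(-n : ℤ)⟧) := hR.shift hX (-n)
    exact (hG i).2 (h1.of_iso hX ((shiftFunctorCompIsoId C n (-n) (by ring)).app (G i)))
  · intro A
    obtain ⟨k, G, hGind, ⟨eA⟩⟩ := hdec A
    set p : Fin k → Prop := fun i => RProp X (G i) with hpdef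
    set q : Fin k → Prop := fun i => ¬ p i with hqdef
    have main : (⨁ G) ≅ (⨁ Subtype.restrict p G) ⊞ (⨁ Subtype.restrict q G) :=
      { hom := biprod.lift (biproduct.toSubtype G p) (biproduct.toSubtype G q)
        inv := biprod.desc (biproduct.fromSubtype G p) (biproduct.fromSubtype G q)
        hom_inv_id := by
          rw [biprod.lift_desc, biproduct.toSubtype_fromSubtype,
            biproduct.toSubtype_fromSubtype]
          refine biproduct.hom_ext' _ _ fun j => ?_
          simp only [Preadditive.comp_add, biproduct.ι_map, Category.comp_id]
          by_cases hj : p j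
          · rw [if_pos hj, if_neg (by rw [hqdef]; exact not_not_intro hj)]
            simp
          · rw [if_neg hj, if_pos (by rw [hqdef]; exact hj)]
            simp
        inv_hom_id := by
          have hpp := biproduct.fromSubtype_toSubtype G p
          have hqq := biproduct.fromSubtype_toSubtype G q
          have hpq : biproduct.fromSubtype G p ≫ biproduct.toSubtype G q = 0 := by
            refine biproduct.hom_ext' _ _ fun a => ?_
            have ha : ¬ q (a : Fin k) := not_not_intro a.2
            rw [biproduct.ι_fromSubtype_assoc]; erw [biproduct.ι_toSubtype]; rw [comp_zero]; exact dif_neg ha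
          have hqp : biproduct.fromSubtype G q ≫ biproduct.toSubtype G p = 0 := by
            refine biproduct.hom_ext' _ _ fun a => ?_
            have ha : ¬ p (a : Fin k) := a.2
            rw [biproduct.ι_fromSubtype_assoc]; erw [biproduct.ι_toSubtype]; rw [comp_zero]; exact dif_neg ha
          refine biprod.hom_ext' _ _ ?_ ?_ <;> refine biprod.hom_ext _ _ ?_ ?_ <;>
            simp [hpp, hqq, hpq, hqp] }
    let εp : Fin (Fintype.card {i // p i}) ≃ {i // p i} := (Fintype.equivFin _).symm
    let εq : Fin (Fintype.card {i // q i}) ≃ {i // q i} := (Fintype.equivFin _).symm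
    let Gp : Fin (Fintype.card {i // p i}) → C := fun j => Subtype.restrict p G (εp j)
    let Gq : Fin (Fintype.card {i // q i}) → C := fun j => Subtype.restrict q G (εq j)
    have ep : (⨁ Gp) ≅ ⨁ Subtype.restrict p G :=
      biproduct.whiskerEquiv εp (fun j => Iso.refl _)
    have eq' : (⨁ Gq) ≅ ⨁ Subtype.restrict q G :=
      biproduct.whiskerEquiv εq (fun j => Iso.refl _)
    refine ⟨⨁ Gp, ⨁ Gq, ?_, ?_, ⟨eA ≪≫ main ≪≫ biprod.mapIso ep.symm eq'.symm⟩⟩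
    · exact ⟨_, Gp, fun j => ⟨hGind _, (εp j).2⟩, ⟨Iso.refl _⟩⟩
    · exact ⟨_, Gq, fun j => ⟨hGind _, (εq j).2⟩, ⟨Iso.refl _⟩⟩
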